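/- For every σ ≥ 1, the coupling map Φ_O is non-decreasing with respect to the order ⪯ on 𝒫^m_{ℓ+1}: for all o, o' ∈ 𝒫^m_{ℓ+1} and all r ∈ ℛ, if o ⪯ o' then Φ_O(o,r) ⪯ Φ_O(o',r). -/

import Mathlib

open Finset

noncomputable section

/-- The mutation map `ℳ_H`. -/
def calMH (ℓ κ : ℕ) (p : ℝ) (b : ℕ) (u : Fin ℓ → ℝ) : ℕ :=
  b - (Finset.univ.filter (fun k : Fin ℓ => (k : ℕ) < b ∧ u k < p / (κ : ℝ))).card
    + (Finset.univ.filter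
        (fun k : Fin ℓ => b ≤ (k : ℕ) ∧ 1 - p * (1 - 1 / (κ : ℝ)) < u k)).card

/-- The lumped fitness function `A_H`. -/
def AH (σ : ℝ) (b : ℕ) : ℝ := if b = 0 then σ else 1

/-- `o(k → l)`: move one chromosome from class `k` to class `l`. -/
def moveOcc (o : ℕ → ℕ) (k l : ℕ) : ℕ → ℕ :=
  Function.update (Function.update o k (o k - 1)) l
    (Function.update o k (o k - 1) l + 1)

/-- `o` is an occupancy distribution of `m` chromosomes in classes `0,…,ℓ`. -/
def isOcc (ℓ m : ℕ) (o : ℕ → ℕ) : Prop :=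
  (∀ h, ℓ < h → o h = 0) ∧ (∑ h ∈ Finset.range (ℓ + 1), o h) = m

/-- The partial order `⪯` on occupancy distributions. -/
def occLE (o o' : ℕ → ℕ) : Prop :=
  ∀ l, (∑ h ∈ Finset.range (l + 1), o h) ≤ ∑ h ∈ Finset.range (l + 1), o' h

-- Auxiliary lemmas


lemma calMH_step (ℓ κ : ℕ) (p : ℝ) (hp1 : p ≤ 1) (u : Fin ℓ → ℝ) (b : ℕ) :
    calMH ℓ κ p b u ≤ calMH ℓ κ p (b+1) u := by
  have hth : p / (κ:ℝ) ≤ 1 - p * (1 - 1/(κ:ℝ)) := by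
    have h : 1 - p * (1 - 1/(κ:ℝ)) = 1 - p + p/(κ:ℝ) := by ring
    rw [h]; linarith
  set A := Finset.univ.filter (fun k : Fin ℓ => (k:ℕ) < b ∧ u k < p / (κ:ℝ)) with hA
  set A' := Finset.univ.filter (fun k : Fin ℓ => (k:ℕ) < b+1 ∧ u k < p / (κ:ℝ)) with hA'
  set B := Finset.univ.filter (fun k : Fin ℓ => b ≤ (k:ℕ) ∧ 1 - p*(1-1/(κ:ℝ)) < u k) with hB
  set B' := Finset.univ.filter (fun k : Fin ℓ => b+1 ≤ (k:ℕ) ∧ 1 - p*(1-1/(κ:ℝ)) < u k) with hB'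
  set C := Finset.univ.filter (fun k : Fin ℓ => (k:ℕ) = b ∧ u k < p / (κ:ℝ)) with hC
  set D := Finset.univ.filter (fun k : Fin ℓ => (k:ℕ) = b ∧ 1 - p*(1-1/(κ:ℝ)) < u k) with hD
  have hAA' : A.card ≤ A'.card := by
    apply Finset.card_le_card
    intro x hx
    simp only [hA, hA', Finset.mem_filter] at hx ⊢
    exact ⟨hx.1, by omega, hx.2.2⟩
  have hA'AC : A'.card ≤ A.card + C.card := by
    calc A'.card ≤ (A ∪ C).card := by
          apply Finset.card_le_card
          intro x hx
          simp only [hA, hA', hC, Finset.mem_filter, Finset.mem_union] at hx ⊢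
          rcases Nat.lt_succ_iff_lt_or_eq.mp hx.2.1 with h | h
          · exact Or.inl ⟨hx.1, h, hx.2.2⟩
          · exact Or.inr ⟨hx.1, h, hx.2.2⟩
      _ ≤ A.card + C.card := Finset.card_union_le _ _
  have hB'B : B'.card ≤ B.card := by
    apply Finset.card_le_card
    intro x hx
    simp only [hB, hB', Finset.mem_filter] at hx ⊢
    exact ⟨hx.1, by omega, hx.2.2⟩
  have hBB'D : B.card ≤ B'.card + D.card := by
    calc B.card ≤ (B' ∪ D).card := by
          apply Finset.card_le_card
          intro x hx
          simp only [hB, hB', hD, Finset.mem_filter, Finset.mem_union] at hx ⊢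
          rcases Nat.lt_or_ge (x : ℕ) (b+1) with h | h
          · exact Or.inr ⟨hx.1, by omega, hx.2.2⟩
          · exact Or.inl ⟨hx.1, h, hx.2.2⟩
      _ ≤ B'.card + D.card := Finset.card_union_le _ _
  have hCD : C.card + D.card ≤ 1 := by
    have hdisj : Disjoint C D := by
      rw [Finset.disjoint_left]
      intro x hxC hxD
      simp only [hC, hD, Finset.mem_filter] at hxC hxD
      linarith [hxC.2.2, hxD.2.2]
    rw [← Finset.card_union_of_disjoint hdisj]
    apply Finset.card_le_one.mpr
    intro x hx y hy
    simp only [hC, hD, Finset.mem_filter, Finset.mem_union] at hx hy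
    have hx' : (x:ℕ) = b := by rcases hx with h | h <;> exact h.2.1
    have hy' : (y:ℕ) = b := by rcases hy with h | h <;> exact h.2.1
    exact Fin.ext (hx'.trans hy'.symm)
  have hAb : A.card ≤ b := by
    calc A.card ≤ (Finset.range b).card := by
          apply Finset.card_le_card_of_injOn (fun k : Fin ℓ => (k:ℕ))
          · intro x hx
            simp only [hA, Finset.mem_coe, Finset.mem_filter] at hx
            exact Finset.mem_range.mpr hx.2.1
          · intro x _ y _ h
            exact Fin.ext h
      _ = b := Finset.card_range b
  unfold calMH
  rw [← hA, ← hA', ← hB, ← hB']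
  omega

lemma calMH_mono (ℓ κ : ℕ) (p : ℝ) (hp1 : p ≤ 1) (u : Fin ℓ → ℝ) :
    Monotone (fun b => calMH ℓ κ p b u) :=
  monotone_nat_of_le_succ (fun b => calMH_step ℓ κ p hp1 u b)


lemma occLE_sum {o o' : ℕ → ℕ} (h : occLE o o') (n : ℕ) :
    (∑ h ∈ Finset.range n, o h) ≤ ∑ h ∈ Finset.range n, o' h := by
  cases n with
  | zero => simp
  | succ t => exact h t

lemma moveOcc_pt (o : ℕ → ℕ) (k l : ℕ) (hk : 1 ≤ o k) (h : ℕ) :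
    moveOcc o k l h + (if h = k then 1 else 0) = o h + (if h = l then 1 else 0) := by
  unfold moveOcc
  by_cases h1 : h = l
  · subst h1
    by_cases h2 : h = k
    · subst h2; simp [Function.update_apply]; omega
    · simp [Function.update_apply, h2]
  · by_cases h2 : h = k
    · subst h2
      simp [Function.update_apply, h1]
      omega
    · simp [Function.update_apply, h1, h2]

lemma sum_moveOcc (o : ℕ → ℕ) (k l : ℕ) (hk : 1 ≤ o k) (t : ℕ) :
    (∑ h ∈ Finset.range (t+1), moveOcc o k l h) + (if k ≤ t then 1 else 0)
      = (∑ h ∈ Finset.range (t+1), o h) + (if l ≤ t then 1 else 0) := by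
  have h1 : ∀ n : ℕ, (∑ h ∈ Finset.range (t+1), (if h = n then 1 else 0))
      = (if n ≤ t then 1 else 0) := by
    intro n
    rw [Finset.sum_ite_eq' (Finset.range (t+1)) n (fun _ => 1)]
    simp [Nat.lt_succ_iff]
  calc (∑ h ∈ Finset.range (t+1), moveOcc o k l h) + (if k ≤ t then 1 else 0)
      = ∑ h ∈ Finset.range (t+1), (moveOcc o k l h + (if h = k then 1 else 0)) := by
        rw [Finset.sum_add_distrib, h1]
    _ = ∑ h ∈ Finset.range (t+1), (o h + (if h = l then 1 else 0)) :=
        Finset.sum_congr rfl (fun h _ => moveOcc_pt o k l hk h)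
    _ = (∑ h ∈ Finset.range (t+1), o h) + (if l ≤ t then 1 else 0) := by
        rw [Finset.sum_add_distrib, h1]

lemma AH_one_le (σ : ℝ) (hσ : 1 ≤ σ) (h : ℕ) : 1 ≤ AH σ h := by
  unfold AH; split <;> linarith

lemma F_mono (σ : ℝ) (hσ : 1 ≤ σ) (o : ℕ → ℕ) {n n' : ℕ} (h : n ≤ n') :
    (∑ h ∈ Finset.range n, (o h:ℝ) * AH σ h) ≤ ∑ h ∈ Finset.range n', (o h:ℝ) * AH σ h := by
  apply Finset.sum_le_sum_of_subset_of_nonneg (Finset.range_subset_range.mpr h)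
  intro i _ _
  exact mul_nonneg (Nat.cast_nonneg _) (by linarith [AH_one_le σ hσ i])

lemma F_split (σ : ℝ) (o : ℕ → ℕ) {n : ℕ} (hn : 1 ≤ n) :
    (∑ h ∈ Finset.range n, (o h:ℝ) * AH σ h)
      = (o 0 : ℝ) * (σ - 1) + ∑ h ∈ Finset.range n, (o h : ℝ) := by
  have hc : ∀ h ∈ Finset.range n, (o h:ℝ) * AH σ h
      = (if h = 0 then (o h:ℝ)*(σ-1) else 0) + (o h:ℝ) := by
    intro h _
    unfold AH
    by_cases h0 : h = 0 <;> simp [h0] <;> ring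
  rw [Finset.sum_congr rfl hc, Finset.sum_add_distrib,
    Finset.sum_ite_eq' (Finset.range n) 0 (fun h => (o h:ℝ)*(σ-1)),
    if_pos (Finset.mem_range.mpr (by omega : 0 < n))]

lemma SO_le_aux (ℓ m : ℕ) (hm : 1 ≤ m) (σ : ℝ) (hσ : 1 ≤ σ)
    (o o' : ℕ → ℕ) (ho : isOcc ℓ m o) (ho' : isOcc ℓ m o') (hle : occLE o o')
    (s : ℝ) (hs0 : 0 ≤ s) (hs1 : s < 1) (n n' : ℕ)
    (h2 : s * (∑ h ∈ Finset.range (ℓ+1), (o h:ℝ) * AH σ h)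
        < ∑ h ∈ Finset.range (n+1), (o h:ℝ) * AH σ h)
    (h1' : (∑ h ∈ Finset.range n', (o' h:ℝ) * AH σ h)
        ≤ s * ∑ h ∈ Finset.range (ℓ+1), (o' h:ℝ) * AH σ h) :
    n' ≤ n := by
  set T := ∑ h ∈ Finset.range (ℓ+1), (o h:ℝ) * AH σ h with hT
  set T' := ∑ h ∈ Finset.range (ℓ+1), (o' h:ℝ) * AH σ h with hT'
  have hmT : (m:ℝ) ≤ T := by
    have : (m:ℝ) = ∑ h ∈ Finset.range (ℓ+1), (o h:ℝ) := by
      rw [← ho.2]; push_cast; ring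
    rw [this]
    apply Finset.sum_le_sum
    intro i _
    nlinarith [AH_one_le σ hσ i, Nat.cast_nonneg (α := ℝ) (o i)]
  have hmT' : (m:ℝ) ≤ T' := by
    have : (m:ℝ) = ∑ h ∈ Finset.range (ℓ+1), (o' h:ℝ) := by
      rw [← ho'.2]; push_cast; ring
    rw [this]
    apply Finset.sum_le_sum
    intro i _
    nlinarith [AH_one_le σ hσ i, Nat.cast_nonneg (α := ℝ) (o' i)]
  have hm1 : (1:ℝ) ≤ (m:ℝ) := by exact_mod_cast hm
  have hn'ℓ : n' ≤ ℓ := by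
    by_contra h
    push_neg at h
    have : T' ≤ ∑ h ∈ Finset.range n', (o' h:ℝ) * AH σ h := F_mono σ hσ o' (by omega)
    nlinarith
  by_contra hc
  push_neg at hc   -- n < n'
  have hn'1 : 1 ≤ n' := by omega
  -- key inequality F o n' * T' ≤ F o' n' * T
  have key : (∑ h ∈ Finset.range n', (o h:ℝ) * AH σ h) * T'
      ≤ (∑ h ∈ Finset.range n', (o' h:ℝ) * AH σ h) * T := by
    rw [F_split σ o hn'1, F_split σ o' hn'1, hT, hT',
      F_split σ o (by omega : 1 ≤ ℓ+1), F_split σ o' (by omega : 1 ≤ ℓ+1)]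
    have ha : (o 0 : ℝ) ≤ (o' 0 : ℝ) := by
      have := hle 0
      simp [Finset.sum_range_one] at this
      exact_mod_cast this
    have hS : (∑ h ∈ Finset.range n', (o h:ℝ)) ≤ ∑ h ∈ Finset.range n', (o' h:ℝ) := by
      have := occLE_sum hle n'
      push_cast
      exact_mod_cast this
    have hSm : (∑ h ∈ Finset.range n', (o h:ℝ)) ≤ (∑ h ∈ Finset.range (ℓ+1), (o h : ℝ)) := by
      apply Finset.sum_le_sum_of_subset_of_nonneg (Finset.range_subset_range.mpr (by omega))
      intro i _ _; positivity
    have hMm : (∑ h ∈ Finset.range (ℓ+1), (o h : ℝ)) = (m:ℝ) := by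
      rw [← ho.2]; push_cast; ring
    have hMm' : (∑ h ∈ Finset.range (ℓ+1), (o' h : ℝ)) = (m:ℝ) := by
      rw [← ho'.2]; push_cast; ring
    rw [hMm, hMm']
    have h0a : (0:ℝ) ≤ (o 0 : ℝ) := Nat.cast_nonneg _
    have h0S : (0:ℝ) ≤ ∑ h ∈ Finset.range n', (o h:ℝ) := by positivity
    rw [hMm] at hSm
    nlinarith [mul_nonneg (sub_nonneg.mpr hSm) (mul_nonneg (by linarith : (0:ℝ) ≤ σ - 1) (sub_nonneg.mpr ha)),
      mul_nonneg (by nlinarith : (0:ℝ) ≤ (o 0:ℝ)*(σ-1) + (m:ℝ)) (sub_nonneg.mpr hS)]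
  have hT'pos : (0:ℝ) < T' := by linarith
  have hTnn : (0:ℝ) ≤ T := by linarith
  have step : (∑ h ∈ Finset.range n', (o h:ℝ) * AH σ h) * T' ≤ s * T * T' := by
    calc (∑ h ∈ Finset.range n', (o h:ℝ) * AH σ h) * T'
        ≤ (∑ h ∈ Finset.range n', (o' h:ℝ) * AH σ h) * T := key
      _ ≤ (s * T') * T := mul_le_mul_of_nonneg_right h1' hTnn
      _ = s * T * T' := by ring
  have hFle : (∑ h ∈ Finset.range n', (o h:ℝ) * AH σ h) ≤ s * T := by
    nlinarith
  have : (∑ h ∈ Finset.range (n+1), (o h:ℝ) * AH σ h)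
      ≤ ∑ h ∈ Finset.range n', (o h:ℝ) * AH σ h := F_mono σ hσ o (by omega)
  linarith


theorem PhiO_monotone
    (ℓ m κ : ℕ) (hℓ : 1 ≤ ℓ) (hm : 1 ≤ m) (hκ : 2 ≤ κ)
    (p : ℝ) (hp : 0 < p ∧ p < 1) (σ : ℝ) (hσ : 1 ≤ σ)
    -- the selection map `𝒮_O`, characterized by
    -- `Σ_{h<𝒮_O(o,s)} o(h)A_H(h) ≤ s·Σ_h o(h)A_H(h) < Σ_{h≤𝒮_O(o,s)} o(h)A_H(h)`
    (SO : (ℕ → ℕ) → ℝ → ℕ)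
    (hSO : ∀ (o : ℕ → ℕ) (s : ℝ), isOcc ℓ m o → 0 ≤ s → s < 1 →
      (∑ h ∈ Finset.range (SO o s), (o h : ℝ) * AH σ h)
          ≤ s * ∑ h ∈ Finset.range (ℓ + 1), (o h : ℝ) * AH σ h ∧
        s * (∑ h ∈ Finset.range (ℓ + 1), (o h : ℝ) * AH σ h)
          < ∑ h ∈ Finset.range (SO o s + 1), (o h : ℝ) * AH σ h)
    -- the class `k` of the chromosome of index `j`, characterized by
    -- `Σ_{h<k} o(h) < j ≤ Σ_{h≤k} o(h)`
    (K : (ℕ → ℕ) → ℕ → ℕ)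
    (hK : ∀ (o : ℕ → ℕ) (j : ℕ), isOcc ℓ m o → 1 ≤ j → j ≤ m →
      (∑ h ∈ Finset.range (K o j), o h) < j ∧
        j ≤ ∑ h ∈ Finset.range (K o j + 1), o h) :
    -- `Φ_O(o,(s,i,j,u)) = o(k → ℳ_H(𝒮_O(o,s),u))` is non-decreasing for `⪯`
    ∀ o o' : ℕ → ℕ, isOcc ℓ m o → isOcc ℓ m o' → occLE o o' →
      ∀ s : ℝ, 0 ≤ s → s < 1 → ∀ _i j : ℕ, 1 ≤ j → j ≤ m →
      ∀ u : Fin ℓ → ℝ, (∀ k, 0 ≤ u k ∧ u k ≤ 1) →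
      occLE (moveOcc o (K o j) (calMH ℓ κ p (SO o s) u))
        (moveOcc o' (K o' j) (calMH ℓ κ p (SO o' s) u)) := by
  obtain ⟨hp0, hp1⟩ := hp
  intro o o' ho ho' hoo' s hs0 hs1 _i j hj1 hjm u hu
  obtain ⟨h1o, h2o⟩ := hSO o s ho hs0 hs1
  obtain ⟨h1o', h2o'⟩ := hSO o' s ho' hs0 hs1
  have hb : SO o' s ≤ SO o s :=
    SO_le_aux ℓ m hm σ hσ o o' ho ho' hoo' s hs0 hs1 _ _ h2o h1o'
  have hll : calMH ℓ κ p (SO o' s) u ≤ calMH ℓ κ p (SO o s) u :=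
    calMH_mono ℓ κ p hp1.le u hb
  obtain ⟨hk1, hk2⟩ := hK o j ho hj1 hjm
  obtain ⟨hk1', hk2'⟩ := hK o' j ho' hj1 hjm
  have hok : 1 ≤ o (K o j) := by
    rw [Finset.sum_range_succ] at hk2; omega
  have hok' : 1 ≤ o' (K o' j) := by
    rw [Finset.sum_range_succ] at hk2'; omega
  set k := K o j with hk
  set k' := K o' j with hk'
  set l := calMH ℓ κ p (SO o s) u with hl
  set l' := calMH ℓ κ p (SO o' s) u with hl'
  have hstrict : ∀ t, k' ≤ t → t < k →
      (∑ h ∈ Finset.range (t+1), o h) + 1 ≤ ∑ h ∈ Finset.range (t+1), o' h := by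
    intro t h1t h2t
    have e1 : (∑ h ∈ Finset.range (t+1), o h) ≤ ∑ h ∈ Finset.range k, o h :=
      Finset.sum_le_sum_of_subset (Finset.range_subset_range.mpr (by omega))
    have e2 : (∑ h ∈ Finset.range (k'+1), o' h) ≤ ∑ h ∈ Finset.range (t+1), o' h :=
      Finset.sum_le_sum_of_subset (Finset.range_subset_range.mpr (by omega))
    omega
  intro t
  have e1 := sum_moveOcc o k l hok t
  have e2 := sum_moveOcc o' k' l' hok' t
  have hS := hoo' t
  rcases le_or_gt k t with hkt | hkt <;> rcases le_or_gt k' t with hk't | hk't <;>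
    rcases le_or_gt l t with hlt | hlt <;> rcases le_or_gt l' t with hl't | hl't
  all_goals (
    first
    | (rw [if_pos hkt] at e1) | (rw [if_neg (by omega : ¬ k ≤ t)] at e1))
  all_goals (
    first
    | (rw [if_pos hlt] at e1) | (rw [if_neg (by omega : ¬ l ≤ t)] at e1))
  all_goals (
    first
    | (rw [if_pos hk't] at e2) | (rw [if_neg (by omega : ¬ k' ≤ t)] at e2))
  all_goals (
    first
    | (rw [if_pos hl't] at e2) | (rw [if_neg (by omega : ¬ l' ≤ t)] at e2))
  all_goals (
    first
    | omega
    | (have := hstrict t (by omega) (by omega); omega))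


end
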